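/- In a 3-regular exact cover instance with no exact cover, the balanced weight vector placing weight 1/3 on each triple coalition violates the Bondareva–Shapley condition for the CC game: let (X, 𝒮) be a 3-regular set system (|X| = 3n̂, each of the 3n̂ sets has 3 elements, each element in exactly 3 sets) with no exact cover, construct the voting game with voters = elements, alternatives = sets, approvals via membership, k = n̂. Define λ(V_j) = 1/3 for each of the 3n̂ coalitions V_j = {voters approving c_j} and λ(S) = 0 otherwise. Then λ is balanced (each voter lies in exactly 3 such coalitions), ∑_S λ(S) · χ_CC(S) = 3n̂, but χ_CC(V) < 3n̂ (no size-n̂ committee covers all voters), so the TU-CC-core is empty by Bondareva–Shapley. -/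

import Mathlib

/-- In a 3-regular set system with no exact cover, the weight vector placing
1/3 on each triple coalition is balanced and violates the Bondareva–Shapley
condition for the CC game, so the TU-CC-core is empty. -/
theorem stmt17 (n : ℕ) (hn : 0 < n)
    (S : Fin (3 * n) → Finset (Fin (3 * n)))
    (hsize : ∀ j, (S j).card = 3)
    (hreg : ∀ x : Fin (3 * n), (Finset.univ.filter (fun j => x ∈ S j)).card = 3)
    (hnocover : ¬ ∃ 𝒮' : Finset (Fin (3 * n)), 𝒮'.card = n ∧
      ∀ x : Fin (3 * n), ∃! j, j ∈ 𝒮' ∧ x ∈ S j)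
    (lam : Finset (Fin (3 * n)) → ℝ)
    (hlam : ∀ T : Finset (Fin (3 * n)),
      lam T = ((Finset.univ.filter (fun j => S j = T)).card : ℝ) / 3)
    (chi : Finset (Fin (3 * n)) → ℕ)
    (hchi : ∀ T : Finset (Fin (3 * n)),
      chi T = ((Finset.univ : Finset (Fin (3 * n))).powerset.filter
          (fun W : Finset (Fin (3 * n)) => W.card ≤ T.card * n / (3 * n))).sup
        (fun W => (T.filter (fun v => ∃ j ∈ W, v ∈ S j)).card)) :
    (∀ v : Fin (3 * n),
      ∑ T : Finset (Fin (3 * n)), (if v ∈ T then lam T else 0) = 1) ∧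
    (∑ T : Finset (Fin (3 * n)), lam T * chi T = 3 * n) ∧
    (chi Finset.univ < 3 * n) ∧
    ¬ ∃ α : Fin (3 * n) → ℝ, (∀ v, 0 ≤ α v) ∧
      (∑ v, α v = (chi Finset.univ : ℝ)) ∧
      ∀ T : Finset (Fin (3 * n)), (chi T : ℝ) ≤ ∑ v ∈ T, α v := by
  have h3n : 0 < 3 * n := by positivity
  -- a real-valued formula for lam
  have hlam' : ∀ T : Finset (Fin (3 * n)),
      lam T = ∑ j : Fin (3 * n), (if S j = T then (1 : ℝ) / 3 else 0) := by
    intro T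
    rw [hlam T, Finset.card_filter]
    push_cast
    rw [Finset.sum_div]
    congr 1; ext j
    by_cases h : S j = T <;> simp [h]
  -- chi of each triple coalition is 3
  have hchiSj : ∀ j, chi (S j) = 3 := by
    intro j
    rw [hchi (S j), hsize j]
    apply le_antisymm
    · apply Finset.sup_le
      intro W _
      calc ((S j).filter fun v => ∃ j' ∈ W, v ∈ S j').card
          ≤ (S j).card := Finset.card_filter_le _ _
        _ = 3 := hsize j
    · have hmem : ({j} : Finset (Fin (3 * n))) ∈
          (Finset.univ : Finset (Fin (3 * n))).powerset.filter
            (fun W => W.card ≤ 3 * n / (3 * n)) := by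
        simp [Nat.div_self h3n]
      have hle := Finset.le_sup
        (f := fun W => ((S j).filter fun v => ∃ j' ∈ W, v ∈ S j').card) hmem
      have heq : (S j).filter (fun v => ∃ j' ∈ ({j} : Finset (Fin (3 * n))), v ∈ S j') = S j := by
        apply Finset.filter_true_of_mem
        intro v hv
        exact ⟨j, Finset.mem_singleton_self j, hv⟩
      have h3le : (3 : ℕ) ≤ ((S j).filter fun v => ∃ j' ∈ ({j} : Finset (Fin (3 * n))), v ∈ S j').card := by
        rw [heq, hsize j]
      exact le_trans h3le hle
  -- Part 1 : balancedness
  have part1 : ∀ v : Fin (3 * n),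
      ∑ T : Finset (Fin (3 * n)), (if v ∈ T then lam T else 0) = 1 := by
    intro v
    have step : ∀ T : Finset (Fin (3 * n)),
        (if v ∈ T then lam T else 0)
          = ∑ j : Fin (3 * n), (if T = S j then (if v ∈ S j then (1:ℝ)/3 else 0) else 0) := by
      intro T
      rw [hlam' T]
      by_cases h : v ∈ T
      · simp only [h, if_true]
        congr 1; ext j
        by_cases hj : T = S j
        · subst hj; simp [h]
        · have hj' : ¬ S j = T := fun hh => hj hh.symm
          simp [hj, hj']
      · simp only [h, if_false]
        rw [eq_comm, Finset.sum_eq_zero]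
        intro j _
        by_cases hj : T = S j
        · subst hj; simp [h]
        · simp [hj]
    rw [Finset.sum_congr rfl (fun T _ => step T), Finset.sum_comm]
    have inner : ∀ j : Fin (3 * n),
        (∑ T : Finset (Fin (3 * n)),
          (if T = S j then (if v ∈ S j then (1:ℝ)/3 else 0) else 0))
        = (if v ∈ S j then (1:ℝ)/3 else 0) := by
      intro j
      rw [Finset.sum_ite_eq' Finset.univ (S j)
        (fun _ => (if v ∈ S j then (1:ℝ)/3 else 0))]
      simp
    rw [Finset.sum_congr rfl (fun j _ => inner j), ← Finset.sum_filter,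
      Finset.sum_const, hreg v]
    norm_num
  -- Part 2 : the weighted sum equals 3n
  have part2 : ∑ T : Finset (Fin (3 * n)), lam T * chi T = 3 * n := by
    have step : ∀ T : Finset (Fin (3 * n)),
        lam T * chi T = ∑ j : Fin (3 * n),
          (if T = S j then (chi (S j) : ℝ) / 3 else 0) := by
      intro T
      rw [hlam' T, Finset.sum_mul]
      congr 1; ext j
      by_cases hj : T = S j
      · subst hj; rw [if_pos rfl, if_pos rfl]; ring
      · have hj' : ¬ S j = T := fun hh => hj hh.symm
        rw [if_neg hj, if_neg hj', zero_mul]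
    rw [Finset.sum_congr rfl (fun T _ => step T), Finset.sum_comm]
    have inner : ∀ j : Fin (3 * n),
        (∑ T : Finset (Fin (3 * n)), (if T = S j then (chi (S j) : ℝ) / 3 else 0))
        = 1 := by
      intro j
      rw [Finset.sum_ite_eq' Finset.univ (S j) (fun _ => (chi (S j) : ℝ) / 3)]
      simp [hchiSj j]
    rw [Finset.sum_congr rfl (fun j _ => inner j), Finset.sum_const]
    simp
  -- Part 3 : chi of the grand coalition is < 3n
  have part3 : chi Finset.univ < 3 * n := by
    have hbound : (Finset.univ : Finset (Fin (3 * n))).card * n / (3 * n) = n := by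
      rw [Finset.card_univ, Fintype.card_fin]
      exact Nat.mul_div_cancel_left n h3n
    have hle : chi Finset.univ ≤ 3 * n := by
      rw [hchi]
      apply Finset.sup_le
      intro W _
      calc (Finset.univ.filter fun v => ∃ j ∈ W, v ∈ S j).card
          ≤ (Finset.univ : Finset (Fin (3 * n))).card := Finset.card_filter_le _ _
        _ = 3 * n := by simp
    rcases lt_or_eq_of_le hle with h | h
    · exact h
    exfalso
    -- the sup is attained at some committee W
    have hne : ((Finset.univ : Finset (Finset (Fin (3 * n)))).filter
        (fun W => W.card ≤ (Finset.univ : Finset (Fin (3 * n))).card * n / (3 * n))).Nonempty := by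
      refine ⟨∅, ?_⟩
      simp
    rw [hchi] at h
    simp only [Finset.powerset_univ] at h
    obtain ⟨W, hWmem, hWeq⟩ := Finset.exists_mem_eq_sup _ hne
      (fun W => (Finset.univ.filter fun v => ∃ j ∈ W, v ∈ S j).card)
    rw [hWeq] at h
    have hWcard : W.card ≤ n := by
      have := (Finset.mem_filter.mp hWmem).2
      rwa [hbound] at this
    -- W covers all voters
    have hcover : ∀ x : Fin (3 * n), ∃ j ∈ W, x ∈ S j := by
      intro x
      have : (Finset.univ.filter fun v => ∃ j ∈ W, v ∈ S j)
          = (Finset.univ : Finset (Fin (3 * n))) := by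
        apply Finset.eq_univ_of_card
        rw [Fintype.card_fin]
        exact h
      have hx : x ∈ Finset.univ.filter fun v => ∃ j ∈ W, v ∈ S j := by
        rw [this]; exact Finset.mem_univ x
      exact (Finset.mem_filter.mp hx).2
    -- double counting
    set cnt : Fin (3 * n) → ℕ := fun x => (W.filter fun j => x ∈ S j).card with hcnt
    have hsum : ∑ x : Fin (3 * n), cnt x = 3 * W.card := by
      simp only [hcnt, Finset.card_filter]
      rw [Finset.sum_comm]
      have : ∀ j ∈ W, (∑ x : Fin (3 * n), if x ∈ S j then 1 else 0) = 3 := by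
        intro j _
        rw [← Finset.card_filter, Finset.filter_univ_mem, hsize j]
      rw [Finset.sum_congr rfl this, Finset.sum_const, smul_eq_mul, mul_comm]
    have hge : ∀ x : Fin (3 * n), 1 ≤ cnt x := by
      intro x
      obtain ⟨j, hjW, hjx⟩ := hcover x
      exact Finset.card_pos.mpr ⟨j, Finset.mem_filter.mpr ⟨hjW, hjx⟩⟩
    have hsumge : 3 * n ≤ ∑ x : Fin (3 * n), cnt x := by
      calc 3 * n = ∑ _x : Fin (3 * n), 1 := by simp
        _ ≤ ∑ x : Fin (3 * n), cnt x := Finset.sum_le_sum (fun x _ => hge x)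
    have hWn : W.card = n := by
      have h1 : 3 * n ≤ 3 * W.card := by rwa [hsum] at hsumge
      have h2 : 3 * W.card ≤ 3 * n := by omega
      omega
    have hsumeq : ∑ x : Fin (3 * n), (1 : ℕ) = ∑ x : Fin (3 * n), cnt x := by
      rw [hsum, hWn]; simp
    have hone : ∀ x : Fin (3 * n), cnt x = 1 := by
      intro x
      have := (Finset.sum_eq_sum_iff_of_le (fun i _ => hge i)).mp hsumeq x (Finset.mem_univ x)
      omega
    apply hnocover
    refine ⟨W, hWn, fun x => ?_⟩
    obtain ⟨a, ha⟩ := Finset.card_eq_one.mp (hone x)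
    have haf : a ∈ W.filter fun j => x ∈ S j := by rw [ha]; simp
    refine ⟨a, ⟨(Finset.mem_filter.mp haf).1, (Finset.mem_filter.mp haf).2⟩, ?_⟩
    intro b hb
    have : b ∈ W.filter fun j => x ∈ S j := Finset.mem_filter.mpr ⟨hb.1, hb.2⟩
    rw [ha] at this
    exact Finset.mem_singleton.mp this
  -- Part 4 : emptiness of the core
  refine ⟨part1, part2, part3, ?_⟩
  rintro ⟨α, _hpos, hsumα, hcore⟩
  have hSj : ∀ j, (3 : ℝ) ≤ ∑ v ∈ S j, α v := by
    intro j
    have := hcore (S j)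
    rwa [hchiSj j] at this
  have hdouble : ∑ j : Fin (3 * n), (∑ v ∈ S j, α v) = 3 * ∑ v : Fin (3 * n), α v := by
    have : ∀ j : Fin (3 * n), (∑ v ∈ S j, α v)
        = ∑ v : Fin (3 * n), (if v ∈ S j then α v else 0) := by
      intro j
      rw [← Finset.sum_filter, Finset.filter_univ_mem]
    rw [Finset.sum_congr rfl (fun j _ => this j), Finset.sum_comm]
    rw [Finset.mul_sum]
    congr 1; ext v
    rw [← Finset.sum_filter, Finset.sum_const, hreg v]
    simp [mul_comm]
  have hlow : (3 * n : ℝ) * 3 ≤ ∑ j : Fin (3 * n), (∑ v ∈ S j, α v) := by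
    calc (3 * n : ℝ) * 3 = ∑ _j : Fin (3 * n), (3 : ℝ) := by
          rw [Finset.sum_const, Finset.card_univ, Fintype.card_fin]
          ring
      _ ≤ _ := Finset.sum_le_sum (fun j _ => hSj j)
  rw [hdouble, hsumα] at hlow
  have hchiub : (chi Finset.univ : ℝ) < 3 * n := by exact_mod_cast part3
  nlinarith
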